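/- Let (D,α,β) be the parallel composition of oss-graphs (G,α,β) and (G',α',β') on disjoint vertex sets, identifying α with α' and β with β'. If lab ∈ UD_{α,β}^{+,+}(G) and lab' ∈ UD_{α',β'}^{−,∅}(G'), then the union labeling lab ∪ lab' is not a valid labeling of D. -/

import Mathlib

namespace UD

variable {V : Type*}

/-- Source of arc `a` in the multidigraph where `⊖`-arcs (label `false`) are reversed. -/
def src (lab : V × V → Bool) (a : V × V) : V := if lab a then a.1 else a.2

/-- Destination of arc `a` in the multidigraph where `⊖`-arcs are reversed. -/
def dst (lab : V × V → Bool) (a : V × V) : V := if lab a then a.2 else a.1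

/-- `l` is a (nonempty) walk from `x` to `y` in the multidigraph obtained from the
arcs `A` by reversing the orientation of the arcs labeled `⊖` (`false`). -/
def IsRevWalk (A : Finset (V × V)) (lab : V × V → Bool) (l : List (V × V)) (x y : V) : Prop :=
  l ≠ [] ∧ (∀ a ∈ l, a ∈ A) ∧ l.Chain' (fun a b => dst lab a = src lab b) ∧
    l.head?.map (src lab) = some x ∧ l.getLast?.map (dst lab) = some y

/-- `l` uses at least one `⊖`-labeled arc. -/
def Negative (lab : V × V → Bool) (l : List (V × V)) : Prop := ∃ a ∈ l, lab a = false

/-- A labeling is valid iff no closed walk of the reversed multidigraph uses a `⊖` arc. -/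
def Valid (A : Finset (V × V)) (lab : V × V → Bool) : Prop :=
  ∀ l : List (V × V), (∃ x, IsRevWalk A lab l x x) → ¬ Negative lab l

/-- Plain directed walk in the digraph with arc set `A`. -/
def IsWalk (A : Finset (V × V)) (l : List (V × V)) (x y : V) : Prop :=
  l ≠ [] ∧ (∀ a ∈ l, a ∈ A) ∧ l.Chain' (fun a b => a.2 = b.1) ∧
    l.head?.map Prod.fst = some x ∧ l.getLast?.map Prod.snd = some y

def Acyclic (A : Finset (V × V)) : Prop := ∀ l x, ¬ IsWalk A l x x

def IsFAS [DecidableEq V] (A F : Finset (V × V)) : Prop := F ⊆ A ∧ Acyclic (A \ F)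

def IsMinFAS [DecidableEq V] (A F : Finset (V × V)) : Prop :=
  IsFAS A F ∧ ∀ F' : Finset (V × V), F' ⊂ F → ¬ IsFAS A F'

/-- Extend a labeling of the arcs of `A` to all of `V × V` (by `⊕` outside `A`). -/
def ext [DecidableEq V] (A : Finset (V × V)) (lab : A → Bool) : V × V → Bool :=
  fun a => if h : a ∈ A then lab ⟨a, h⟩ else true

def ValidOn [DecidableEq V] (A : Finset (V × V)) (lab : A → Bool) : Prop := Valid A (ext A lab)

/-- Number of valid labelings (update digraphs) of the digraph with arc set `A`. -/
noncomputable def numUD [DecidableEq V] (A : Finset (V × V)) : ℕ := Nat.card {lab : A → Bool // ValidOn A lab}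

inductive PClass
  | pos | neg | none
  deriving DecidableEq

/-- Connectivity class of the ordered pair `(x, y)` in the reversed multidigraph. -/
def HasClass (A : Finset (V × V)) (lab : V × V → Bool) (x y : V) : PClass → Prop
  | .pos => (∃ l, IsRevWalk A lab l x y) ∧ ∀ l, IsRevWalk A lab l x y → ¬ Negative lab l
  | .neg => ∃ l, IsRevWalk A lab l x y ∧ Negative lab l
  | .none => ¬ ∃ l, IsRevWalk A lab l x y

/-- Number of valid labelings in the class `(s, t)` of the oss-graph `(A, α, β)`. -/
noncomputable def classCount [DecidableEq V] (A : Finset (V × V)) (α β : V) (s t : PClass) : ℕ :=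
  Nat.card {lab : A → Bool //
    ValidOn A lab ∧ HasClass A (ext A lab) α β s ∧ HasClass A (ext A lab) β α t}

/-- Index of the part of the ordered partition `B` containing `v`. -/
def partIdx [DecidableEq V] (B : List (Finset V)) (v : V) : ℕ :=
  B.findIdx (fun P => decide (v ∈ P))

/-- `B` is an ordered partition of `V` (a block-sequential update schedule). -/
def IsOrdPartition [DecidableEq V] (B : List (Finset V)) : Prop :=
  (∀ P ∈ B, P.Nonempty) ∧ B.Pairwise Disjoint ∧ ∀ v : V, ∃ P ∈ B, v ∈ P

/-- The labeling induced by a schedule: `⊕` (true) iff `i`'s part is not strictly before `j`'s. -/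
def labSched [DecidableEq V] (B : List (Finset V)) : V × V → Bool :=
  fun a => decide (partIdx B a.2 ≤ partIdx B a.1)

/-- Map the vertices of `G'` into the parallel composition identifying `α'` with `α` and
`β'` with `β`. -/
def pmap {V V' : Type*} [DecidableEq V'] (α β : V) (α' β' : V') : V' → V ⊕ V' :=
  fun w => if w = α' then Sum.inl α else if w = β' then Sum.inl β else Sum.inr w

/-- Arc set of the parallel composition of `(G, α, β)` and `(G', α', β')`. -/
def parArcs {V V' : Type*} [DecidableEq V] [DecidableEq V'] (A : Finset (V × V))
    (A' : Finset (V' × V')) (α β : V) (α' β' : V') : Finset ((V ⊕ V') × (V ⊕ V')) :=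
  A.image (fun a => (Sum.inl a.1, Sum.inl a.2)) ∪
    A'.image (fun a => (pmap α β α' β' a.1, pmap α β α' β' a.2))

/-- Preimage in `V'` of an identified vertex of `V`. -/
def pinv {V V' : Type*} [DecidableEq V] (α : V) (α' β' : V') : V → V' :=
  fun x => if x = α then α' else β'

/-- The union labeling on the parallel composition. -/
def parLab {V V' : Type*} [DecidableEq V] (A : Finset (V × V)) (α : V) (α' β' : V')
    (lab : V × V → Bool) (lab' : V' × V' → Bool) : (V ⊕ V') × (V ⊕ V') → Bool := fun b =>
  match b with
  | (Sum.inl x, Sum.inl y) =>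
      if (x, y) ∈ A then lab (x, y) else lab' (pinv α α' β' x, pinv α α' β' y)
  | (Sum.inl x, Sum.inr w) => lab' (pinv α α' β' x, w)
  | (Sum.inr w, Sum.inl y) => lab' (w, pinv α α' β' y)
  | (Sum.inr w, Sum.inr w') => lab' (w, w')

private lemma chain'_map_mem {A B : Type*} {S : A → Prop} {R : A → A → Prop}
    {R' : B → B → Prop} (f : A → B)
    (h : ∀ a b, S a → S b → R a b → R' (f a) (f b)) :
    ∀ l : List A, (∀ a ∈ l, S a) → l.Chain' R → (l.map f).Chain' R'
  | [], _, _ => List.isChain_nil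
  | [a], _, _ => List.isChain_singleton _
  | a :: b :: t, hS, hc => by
    rw [List.Chain', List.isChain_cons_cons] at hc
    simp only [List.Chain', List.map_cons, List.isChain_cons_cons]
    refine ⟨h a b (hS a (by simp)) (hS b (by simp)) hc.1, ?_⟩
    have := chain'_map_mem f h (b :: t) (fun x hx => hS x (List.mem_cons_of_mem _ hx)) hc.2
    simpa [List.Chain'] using this

section Par

variable {V V' : Type*} [DecidableEq V] [DecidableEq V']
variable {A : Finset (V × V)} {A' : Finset (V' × V')} {α β : V} {α' β' : V'}
variable {lab : V × V → Bool} {lab' : V' × V' → Bool}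

private lemma parLab_inl {a : V × V} (ha : a ∈ A) :
    parLab A α α' β' lab lab' (Sum.inl a.1, Sum.inl a.2) = lab a := by
  obtain ⟨x, y⟩ := a
  simp [parLab, ha]

private lemma parLab_pmap (hαβ : α ≠ β) (hαβ' : α' ≠ β')
    (hloop' : ∀ a ∈ A', a.1 ≠ a.2)
    (hcol1 : ¬((α, β) ∈ A ∧ (α', β') ∈ A')) (hcol2 : ¬((β, α) ∈ A ∧ (β', α') ∈ A'))
    {a : V' × V'} (ha : a ∈ A') :
    parLab A α α' β' lab lab' (pmap α β α' β' a.1, pmap α β α' β' a.2) = lab' a := by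
  obtain ⟨u, w⟩ := a
  have hne : u ≠ w := hloop' (u, w) ha
  by_cases hu1 : u = α' <;> by_cases hu2 : u = β' <;>
    by_cases hw1 : w = α' <;> by_cases hw2 : w = β' <;>
    subst_vars <;>
    simp_all [pmap, pinv, parLab, hαβ, hαβ.symm, hαβ', hαβ'.symm]

private lemma src_parLab_inl {a : V × V} (ha : a ∈ A) :
    src (parLab A α α' β' lab lab') (Sum.inl a.1, Sum.inl a.2) = Sum.inl (src lab a) := by
  simp only [src, parLab_inl ha]
  cases lab a <;> simp

private lemma dst_parLab_inl {a : V × V} (ha : a ∈ A) :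
    dst (parLab A α α' β' lab lab') (Sum.inl a.1, Sum.inl a.2) = Sum.inl (dst lab a) := by
  simp only [dst, parLab_inl ha]
  cases lab a <;> simp

private lemma src_parLab_pmap (hαβ : α ≠ β) (hαβ' : α' ≠ β')
    (hloop' : ∀ a ∈ A', a.1 ≠ a.2)
    (hcol1 : ¬((α, β) ∈ A ∧ (α', β') ∈ A')) (hcol2 : ¬((β, α) ∈ A ∧ (β', α') ∈ A'))
    {a : V' × V'} (ha : a ∈ A') :
    src (parLab A α α' β' lab lab') (pmap α β α' β' a.1, pmap α β α' β' a.2) =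
      pmap α β α' β' (src lab' a) := by
  simp only [src, parLab_pmap hαβ hαβ' hloop' hcol1 hcol2 ha]
  cases lab' a <;> simp

private lemma dst_parLab_pmap (hαβ : α ≠ β) (hαβ' : α' ≠ β')
    (hloop' : ∀ a ∈ A', a.1 ≠ a.2)
    (hcol1 : ¬((α, β) ∈ A ∧ (α', β') ∈ A')) (hcol2 : ¬((β, α) ∈ A ∧ (β', α') ∈ A'))
    {a : V' × V'} (ha : a ∈ A') :
    dst (parLab A α α' β' lab lab') (pmap α β α' β' a.1, pmap α β α' β' a.2) =
      pmap α β α' β' (dst lab' a) := by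
  simp only [dst, parLab_pmap hαβ hαβ' hloop' hcol1 hcol2 ha]
  cases lab' a <;> simp

end Par

/-- For the parallel composition `D` of `(G, α, β)` and `(G', α', β')`, the union of a
labeling in `UD_{α,β}^{+,+}(G)` and a labeling in `UD_{α',β'}^{-,∅}(G')` is not a valid
labeling of `D`. -/
theorem statement17 {V V' : Type*} [DecidableEq V] [DecidableEq V']
    (A : Finset (V × V)) (A' : Finset (V' × V')) (α β : V) (α' β' : V')
    (hαβ : α ≠ β) (hαβ' : α' ≠ β')
    (hloop : ∀ a ∈ A, a.1 ≠ a.2) (hloop' : ∀ a ∈ A', a.1 ≠ a.2)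
    (hcol1 : ¬((α, β) ∈ A ∧ (α', β') ∈ A')) (hcol2 : ¬((β, α) ∈ A ∧ (β', α') ∈ A'))
    (lab : V × V → Bool) (lab' : V' × V' → Bool)
    (hv : Valid A lab) (hv' : Valid A' lab')
    (h1 : HasClass A lab α β PClass.pos) (h2 : HasClass A lab β α PClass.pos)
    (h1' : HasClass A' lab' α' β' PClass.neg) (h2' : HasClass A' lab' β' α' PClass.none) :
    ¬ Valid (parArcs A A' α β α' β') (parLab A α α' β' lab lab') := by
  intro hV
  obtain ⟨l', hw', hn'⟩ := h1'
  obtain ⟨⟨l, hw⟩, -⟩ := h2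
  obtain ⟨hne', hmem', hch', hhd', hlt'⟩ := hw'
  obtain ⟨hne, hmem, hch, hhd, hlt⟩ := hw
  set F : V × V → (V ⊕ V') × (V ⊕ V') := fun a => (Sum.inl a.1, Sum.inl a.2) with hF
  set F' : V' × V' → (V ⊕ V') × (V ⊕ V') :=
    fun a => (pmap α β α' β' a.1, pmap α β α' β' a.2) with hF'
  set pl := parLab A α α' β' lab lab' with hpl
  set L := l'.map F' ++ l.map F with hL
  have hpmapα : pmap α β α' β' α' = Sum.inl α := by simp [pmap]
  have hpmapβ : pmap α β α' β' β' = Sum.inl β := by simp [pmap, hαβ'.symm]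
  have hwalk : IsRevWalk (parArcs A A' α β α' β') pl L (Sum.inl α) (Sum.inl α) := by
    refine ⟨?_, ?_, ?_, ?_, ?_⟩
    · simp [hL, hne']
    · intro a haL
      rw [hL, List.mem_append] at haL
      rcases haL with h | h
      · obtain ⟨b, hb, rfl⟩ := List.mem_map.mp h
        exact Finset.mem_union_right _ (Finset.mem_image_of_mem _ (hmem' b hb))
      · obtain ⟨b, hb, rfl⟩ := List.mem_map.mp h
        exact Finset.mem_union_left _ (Finset.mem_image_of_mem _ (hmem b hb))
    · rw [hL, List.Chain', List.isChain_append]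
      refine ⟨?_, ?_, ?_⟩
      · refine chain'_map_mem F' (S := fun a => a ∈ A') ?_ l' hmem' hch'
        intro a b haA hbA hab
        show dst pl (F' a) = src pl (F' b)
        rw [hF', hpl, dst_parLab_pmap hαβ hαβ' hloop' hcol1 hcol2 haA,
          src_parLab_pmap hαβ hαβ' hloop' hcol1 hcol2 hbA, hab]
      · refine chain'_map_mem F (S := fun a => a ∈ A) ?_ l hmem hch
        intro a b haA hbA hab
        show dst pl (F a) = src pl (F b)
        rw [hF, hpl, dst_parLab_inl haA, src_parLab_inl hbA, hab]
      · intro x hx y hy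
        rw [List.getLast?_map] at hx
        rw [List.head?_map] at hy
        obtain ⟨a, ha, rfl⟩ := Option.map_eq_some_iff.mp (Option.mem_def.mp hx)
        obtain ⟨b, hb, rfl⟩ := Option.map_eq_some_iff.mp (Option.mem_def.mp hy)
        have haA : a ∈ A' := hmem' a (List.mem_of_mem_getLast? ha)
        have hbA : b ∈ A := hmem b (List.mem_of_mem_head? hb)
        have hda : dst lab' a = β' := by
          rw [ha] at hlt'; simpa using hlt'
        have hsb : src lab b = β := by
          rw [hb] at hhd; simpa using hhd
        show dst pl (F' a) = src pl (F b)
        rw [hF', hF, hpl, dst_parLab_pmap hαβ hαβ' hloop' hcol1 hcol2 haA,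
          src_parLab_inl hbA, hda, hsb, hpmapβ]
    · obtain ⟨a, h⟩ : ∃ a, l'.head? = some a :=
        Option.ne_none_iff_exists'.mp (fun hn => hne' (List.head?_eq_none_iff.mp hn))
      have haA : a ∈ A' := hmem' a (List.mem_of_mem_head? h)
      have hsa : src lab' a = α' := by rw [h] at hhd'; simpa using hhd'
      rw [hL, List.head?_append, List.head?_map, h]
      simp only [Option.map_some, Option.or_some, Option.or]
      show some (src pl (F' a)) = _
      rw [hF', hpl, src_parLab_pmap hαβ hαβ' hloop' hcol1 hcol2 haA, hsa, hpmapα]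
    · obtain ⟨a, h⟩ : ∃ a, l.getLast? = some a :=
        Option.ne_none_iff_exists'.mp (fun hn => hne (List.getLast?_eq_none_iff.mp hn))
      have haA : a ∈ A := hmem a (List.mem_of_mem_getLast? h)
      have hda : dst lab a = α := by rw [h] at hlt; simpa using hlt
      rw [hL, List.getLast?_append, List.getLast?_map, h]
      simp only [Option.map_some, Option.or_some, Option.or]
      show some (dst pl (F a)) = _
      rw [hF, hpl, dst_parLab_inl haA, hda]
  obtain ⟨a, hal', hafalse⟩ := hn'
  refine hV L ⟨Sum.inl α, hwalk⟩ ⟨F' a, ?_, ?_⟩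
  · rw [hL, List.mem_append]
    exact Or.inl (List.mem_map_of_mem hal')
  · rw [hpl, hF']
    rw [parLab_pmap hαβ hαβ' hloop' hcol1 hcol2 (hmem' a hal')]
    exact hafalse


end UD
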